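/- For the von Mises density f_vM(x; μ, κ) = C_q(κ) exp(κ x^T μ), extended to ℝ^{q+1}\{0} by f(x) = f(x/‖x‖), the operator Ψ(f,x) = -x^T ∇f(x) + q^{-1}(∇²f(x) - x^T H f(x) x) evaluated at x ∈ Ω_q equals κ C_q(κ) e^{κ x^T μ} ( -x^T μ + κ q^{-1}(1 - (x^T μ)^2) ). -/

import Mathlib

open MeasureTheory Real Set

noncomputable def besselI (ν z : ℝ) : ℝ :=
  (z / 2) ^ ν / (Real.sqrt π * Real.Gamma (ν + 1 / 2)) *
    ∫ t in Ioo (-1 : ℝ) 1, (1 - t ^ 2) ^ (ν - 1 / 2) * Real.exp (z * t)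

noncomputable def Cq (q : ℕ) (κ : ℝ) : ℝ :=
  κ ^ (((q : ℝ) - 1) / 2) / ((2 * π) ^ (((q : ℝ) + 1) / 2) * besselI (((q : ℝ) - 1) / 2) κ)

/-- The operator `Ψ(f,x) = -xᵀ∇f(x) + q⁻¹(∇²f(x) - xᵀ Hf(x) x)`, where the Laplacian and
the Hessian quadratic form are expressed through the second iterated Fréchet derivative. -/
noncomputable def PsiOp (q : ℕ) (f : EuclideanSpace ℝ (Fin (q + 1)) → ℝ)
    (x : EuclideanSpace ℝ (Fin (q + 1))) : ℝ :=
  -inner ℝ x (gradient f x) + (q : ℝ)⁻¹ *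
    ((∑ i : Fin (q + 1),
        iteratedFDeriv ℝ 2 f x ![EuclideanSpace.single i (1 : ℝ), EuclideanSpace.single i (1 : ℝ)])
      - iteratedFDeriv ℝ 2 f x ![x, x])

/-- The radial extension of the von Mises density `f_vM(·;μ,κ)` to `ℝ^{q+1} \ {0}`. -/
noncomputable def vonMisesExt (q : ℕ) (μ : EuclideanSpace ℝ (Fin (q + 1))) (κ : ℝ)
    (y : EuclideanSpace ℝ (Fin (q + 1))) : ℝ :=
  Cq q κ * Real.exp (κ * inner ℝ (‖y‖⁻¹ • y) μ)

section Aux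

variable {q : ℕ}

local notation "E" => EuclideanSpace ℝ (Fin (q + 1))

noncomputable def sfun (μ y : E) : ℝ :=
  (inner ℝ y μ : ℝ) * (inner ℝ y y : ℝ) ^ (-(1/2) : ℝ)

noncomputable def D1 (μ : E) (C κ : ℝ) (y : E) : EuclideanSpace ℝ (Fin (q+1)) →L[ℝ] ℝ :=
  (C * Real.exp (κ * sfun μ y) * κ) •
    (((inner ℝ y y : ℝ) ^ (-(1/2) : ℝ)) • innerSL ℝ μ
      + (-(inner ℝ y μ : ℝ) * (inner ℝ y y : ℝ) ^ (-(3/2) : ℝ)) • innerSL ℝ y)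

lemma hasFDerivAt_g (μ : E) (C κ : ℝ) {y : E} (hy : y ≠ 0) :
    HasFDerivAt (fun z : E => C * Real.exp (κ * sfun μ z)) (D1 μ C κ y) y := by
  have hr : (0:ℝ) < inner ℝ y y := by
    rw [real_inner_self_eq_norm_mul_norm]
    have := norm_pos_iff.mpr hy
    positivity
  have h_r : HasFDerivAt (fun z : E => (inner ℝ z z : ℝ))
      ((fderivInnerCLM ℝ (y, y)).comp ((ContinuousLinearMap.id ℝ E).prod
        (ContinuousLinearMap.id ℝ E))) y :=
    (hasFDerivAt_id y).inner ℝ (hasFDerivAt_id y)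
  have h_m : HasFDerivAt (fun z : E => (inner ℝ z μ : ℝ))
      ((fderivInnerCLM ℝ (y, μ)).comp ((ContinuousLinearMap.id ℝ E).prod 0)) y :=
    (hasFDerivAt_id y).inner ℝ (hasFDerivAt_const μ y)
  have h_p : HasFDerivAt (fun z : E => (inner ℝ z z : ℝ) ^ (-(1/2) : ℝ))
      ((-(1/2) * (inner ℝ y y : ℝ) ^ (-(1/2) - 1 : ℝ)) •
        ((fderivInnerCLM ℝ (y, y)).comp ((ContinuousLinearMap.id ℝ E).prod
          (ContinuousLinearMap.id ℝ E)))) y := by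
    have := (Real.hasDerivAt_rpow_const (x := (inner ℝ y y : ℝ)) (p := (-(1/2) : ℝ))
      (Or.inl hr.ne')).comp_hasFDerivAt_of_eq y h_r rfl
    simpa [Function.comp_def] using this
  have h_s := h_m.mul h_p
  have h_e := ((h_s.const_mul κ).exp).const_mul C
  refine (h_e.congr_fderiv ?_)
  ext v
  simp only [D1, sfun, ContinuousLinearMap.smul_apply, ContinuousLinearMap.add_apply,
    ContinuousLinearMap.comp_apply, ContinuousLinearMap.prod_apply, ContinuousLinearMap.coe_id,
    id_eq, ContinuousLinearMap.zero_apply, fderivInnerCLM_apply, innerSL_apply_apply,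
    ContinuousLinearMap.smul_apply, smul_eq_mul,
    ContinuousLinearMap.id_apply, inner_zero_right, Pi.mul_apply]
  rw [show ((-(1/2) : ℝ) - 1) = -(3/2) by norm_num,
    real_inner_comm v y, real_inner_comm v μ]
  ring

lemma fderiv_D1_apply (μ : E) (C κ : ℝ) {x : E} (hx1 : (inner ℝ x x : ℝ) = 1) (w v : E) :
    fderiv ℝ (fun y : E => D1 μ C κ y w) x v =
      C * Real.exp (κ * (inner ℝ x μ : ℝ)) * κ *
        (κ * ((inner ℝ v μ : ℝ) - (inner ℝ x μ : ℝ) * (inner ℝ x v : ℝ)) *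
            ((inner ℝ w μ : ℝ) - (inner ℝ x μ : ℝ) * (inner ℝ x w : ℝ))
          - (inner ℝ x v : ℝ) * (inner ℝ w μ : ℝ) - (inner ℝ v μ : ℝ) * (inner ℝ x w : ℝ)
          + 3 * (inner ℝ x μ : ℝ) * (inner ℝ x v : ℝ) * (inner ℝ x w : ℝ)
          - (inner ℝ x μ : ℝ) * (inner ℝ v w : ℝ)) := by
  have hx0 : x ≠ 0 := by
    intro h; rw [h] at hx1; simp at hx1
  have hr : (0:ℝ) < inner ℝ x x := by rw [hx1]; norm_num
  have hfun : (fun y : E => D1 μ C κ y w) = fun y : E =>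
      (C * Real.exp (κ * sfun μ y) * κ) *
        ((inner ℝ y y : ℝ) ^ (-(1/2) : ℝ) * (inner ℝ μ w : ℝ)
          + (-(inner ℝ y μ : ℝ) * (inner ℝ y y : ℝ) ^ (-(3/2) : ℝ)) * (inner ℝ y w : ℝ)) := by
    funext y
    simp [D1]
    ring
  have h_r : HasFDerivAt (fun z : E => (inner ℝ z z : ℝ))
      ((fderivInnerCLM ℝ (x, x)).comp ((ContinuousLinearMap.id ℝ E).prod
        (ContinuousLinearMap.id ℝ E))) x :=
    (hasFDerivAt_id x).inner ℝ (hasFDerivAt_id x)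
  have h_m : HasFDerivAt (fun z : E => (inner ℝ z μ : ℝ))
      ((fderivInnerCLM ℝ (x, μ)).comp ((ContinuousLinearMap.id ℝ E).prod 0)) x :=
    (hasFDerivAt_id x).inner ℝ (hasFDerivAt_const μ x)
  have h_yw : HasFDerivAt (fun z : E => (inner ℝ z w : ℝ))
      ((fderivInnerCLM ℝ (x, w)).comp ((ContinuousLinearMap.id ℝ E).prod 0)) x :=
    (hasFDerivAt_id x).inner ℝ (hasFDerivAt_const w x)
  have h_p : HasFDerivAt (fun z : E => (inner ℝ z z : ℝ) ^ (-(1/2) : ℝ))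
      ((-(1/2) * (inner ℝ x x : ℝ) ^ (-(1/2) - 1 : ℝ)) •
        ((fderivInnerCLM ℝ (x, x)).comp ((ContinuousLinearMap.id ℝ E).prod
          (ContinuousLinearMap.id ℝ E)))) x := by
    have := (Real.hasDerivAt_rpow_const (x := (inner ℝ x x : ℝ)) (p := (-(1/2) : ℝ))
      (Or.inl hr.ne')).comp_hasFDerivAt_of_eq x h_r rfl
    simpa [Function.comp_def] using this
  have h_p3 : HasFDerivAt (fun z : E => (inner ℝ z z : ℝ) ^ (-(3/2) : ℝ))
      ((-(3/2) * (inner ℝ x x : ℝ) ^ (-(3/2) - 1 : ℝ)) •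
        ((fderivInnerCLM ℝ (x, x)).comp ((ContinuousLinearMap.id ℝ E).prod
          (ContinuousLinearMap.id ℝ E)))) x := by
    have := (Real.hasDerivAt_rpow_const (x := (inner ℝ x x : ℝ)) (p := (-(3/2) : ℝ))
      (Or.inl hr.ne')).comp_hasFDerivAt_of_eq x h_r rfl
    simpa [Function.comp_def] using this
  have h1 := (hasFDerivAt_g μ C κ hx0).mul_const κ
  have hA := (h_p.mul_const ((inner ℝ μ w : ℝ))).add ((h_m.neg.mul h_p3).mul h_yw)
  have hF := h1.mul hA
  rw [hfun]
  erw [hF.fderiv]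
  have hs : sfun μ x = (inner ℝ x μ : ℝ) := by simp only [sfun, hx1, Real.one_rpow, mul_one]
  simp only [D1, hs, hx1, Real.one_rpow, ContinuousLinearMap.smul_apply,
    ContinuousLinearMap.add_apply, ContinuousLinearMap.comp_apply,
    ContinuousLinearMap.prod_apply, ContinuousLinearMap.id_apply,
    ContinuousLinearMap.zero_apply, fderivInnerCLM_apply, innerSL_apply_apply,
    inner_zero_right, smul_eq_mul, one_mul, mul_one, add_zero, zero_add,
    ContinuousLinearMap.neg_apply, Pi.mul_apply, Pi.add_apply, Pi.neg_apply]
  rw [real_inner_comm x v, real_inner_comm v μ, real_inner_comm w μ]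
  ring


/-- For the radially extended von Mises density, the operator `Ψ` evaluated at `x ∈ Ω_q`
equals `κ C_q(κ) e^{κ xᵀμ} ( -xᵀμ + κ q⁻¹ (1 - (xᵀμ)²) )`. -/
theorem PsiOp_vonMises (q : ℕ) (hq : 1 ≤ q) (κ : ℝ) (hκ : 0 < κ)
    (μ x : EuclideanSpace ℝ (Fin (q + 1)))
    (hμ : μ ∈ Metric.sphere (0 : EuclideanSpace ℝ (Fin (q + 1))) 1)
    (hx : x ∈ Metric.sphere (0 : EuclideanSpace ℝ (Fin (q + 1))) 1) :
    PsiOp q (vonMisesExt q μ κ) x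
      = κ * Cq q κ * Real.exp (κ * inner ℝ x μ) *
        (-(inner ℝ x μ : ℝ) + κ * (q : ℝ)⁻¹ * (1 - (inner ℝ x μ : ℝ) ^ 2)) := by
  have hxn : ‖x‖ = 1 := by simpa using hx
  have hμn : ‖μ‖ = 1 := by simpa using hμ
  have hx1 : (inner ℝ x x : ℝ) = 1 := by
    rw [real_inner_self_eq_norm_mul_norm, hxn]; norm_num
  have hμ1 : (inner ℝ μ μ : ℝ) = 1 := by
    rw [real_inner_self_eq_norm_mul_norm, hμn]; norm_num
  have hx0 : x ≠ 0 := by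
    intro h; rw [h, norm_zero] at hxn; norm_num at hxn
  set C := Cq q κ with hC
  set t : ℝ := inner ℝ x μ with ht
  -- identification of the function
  have hg : vonMisesExt q μ κ = fun y : EuclideanSpace ℝ (Fin (q+1)) =>
      C * Real.exp (κ * sfun μ y) := by
    funext y
    unfold vonMisesExt sfun
    congr 2
    by_cases hy : y = 0
    · simp [hy]
    · have hny : (0:ℝ) < ‖y‖ := norm_pos_iff.mpr hy
      have hpow : ((‖y‖ : ℝ) ^ (2:ℕ)) ^ (-(1/2) : ℝ) = ‖y‖⁻¹ := by
        rw [← Real.rpow_natCast ‖y‖ 2, ← Real.rpow_mul hny.le]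
        norm_num [Real.rpow_neg_one]
      rw [real_inner_smul_left, real_inner_self_eq_norm_sq, hpow]
      ring
  set g : EuclideanSpace ℝ (Fin (q+1)) → ℝ := fun y => C * Real.exp (κ * sfun μ y) with hgdef
  have hs : sfun μ x = t := by simp only [sfun, hx1, Real.one_rpow, mul_one, ht]
  have e1 : ∑ i, μ i * μ i = 1 := by
    have := hμ1
    rw [PiLp.inner_apply] at this
    simpa [pow_two] using this
  have e2 : ∑ i, x i * μ i = t := by
    have := ht
    rw [PiLp.inner_apply] at this
    simpa [mul_comm] using this.symm
  have e3 : ∑ i, x i * x i = 1 := by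
    have := hx1
    rw [PiLp.inner_apply] at this
    simpa [pow_two] using this
  -- gradient term
  have hfd : HasFDerivAt g (D1 μ C κ x) x := hasFDerivAt_g μ C κ hx0
  have hgrad : (inner ℝ x (gradient g x) : ℝ) = 0 := by
    rw [real_inner_comm]
    unfold gradient
    rw [InnerProductSpace.toDual_symm_apply, hfd.fderiv]
    simp only [D1, ContinuousLinearMap.smul_apply, ContinuousLinearMap.add_apply,
      innerSL_apply_apply, smul_eq_mul, hs]
    rw [hx1, Real.one_rpow, Real.one_rpow, real_inner_comm x μ, ← ht]
    ring
  -- eventual equality of first derivative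
  have hev : ∀ w : EuclideanSpace ℝ (Fin (q+1)),
      (fun y => fderiv ℝ g y w) =ᶠ[nhds x] (fun y => D1 μ C κ y w) := by
    intro w
    filter_upwards [IsOpen.mem_nhds isOpen_compl_singleton hx0] with y hy
    rw [(hasFDerivAt_g μ C κ hy).fderiv]
  -- smoothness
  have hcd : ContDiffAt ℝ 2 g x := by
    have hm : ContDiffAt ℝ 2 (fun y : EuclideanSpace ℝ (Fin (q+1)) => (inner ℝ y μ : ℝ)) x :=
      contDiffAt_id.inner ℝ contDiffAt_const
    have hr : ContDiffAt ℝ 2 (fun y : EuclideanSpace ℝ (Fin (q+1)) => (inner ℝ y y : ℝ)) x :=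
      contDiffAt_id.inner ℝ contDiffAt_id
    have hp : ContDiffAt ℝ 2
        (fun y : EuclideanSpace ℝ (Fin (q+1)) => (inner ℝ y y : ℝ) ^ (-(1/2) : ℝ)) x :=
      hr.rpow_const_of_ne (by rw [hx1]; norm_num)
    exact contDiffAt_const.mul ((contDiffAt_const.mul (hm.mul hp)).exp)
  have hdd : DifferentiableAt ℝ (fderiv ℝ g) x := by
    have := hcd.fderiv_right (m := 1) (by norm_num)
    exact this.differentiableAt (by norm_num)
  -- the second derivative formula
  have key : ∀ v w : EuclideanSpace ℝ (Fin (q+1)),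
      iteratedFDeriv ℝ 2 g x ![v, w] =
        C * Real.exp (κ * t) * κ *
          (κ * ((inner ℝ v μ : ℝ) - t * (inner ℝ x v : ℝ)) *
              ((inner ℝ w μ : ℝ) - t * (inner ℝ x w : ℝ))
            - (inner ℝ x v : ℝ) * (inner ℝ w μ : ℝ) - (inner ℝ v μ : ℝ) * (inner ℝ x w : ℝ)
            + 3 * t * (inner ℝ x v : ℝ) * (inner ℝ x w : ℝ)
            - t * (inner ℝ v w : ℝ)) := by
    intro v w
    rw [iteratedFDeriv_two_apply]
    simp only [Matrix.cons_val_zero, Matrix.cons_val_one, Matrix.head_cons]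
    have h1 : fderiv ℝ (fun y => fderiv ℝ g y w) x =
        (fderiv ℝ (fderiv ℝ g) x).flip w := by
      rw [fderiv_clm_apply hdd (differentiableAt_const w)]
      simp
    have h2 : fderiv ℝ (fderiv ℝ g) x v w = fderiv ℝ (fun y => fderiv ℝ g y w) x v := by
      rw [h1]; rfl
    rw [h2, (hev w).fderiv_eq, fderiv_D1_apply μ C κ hx1 w v, ← ht]
  -- sum over the standard basis
  have hqR : (q : ℝ) ≠ 0 := Nat.cast_ne_zero.mpr (by omega)
  have hsum : (∑ i : Fin (q + 1),
      iteratedFDeriv ℝ 2 g x ![EuclideanSpace.single i (1:ℝ), EuclideanSpace.single i (1:ℝ)])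
      = C * Real.exp (κ * t) * κ * (κ * (1 - t^2) - q * t) := by
    have hterm : ∀ i : Fin (q + 1),
        iteratedFDeriv ℝ 2 g x ![EuclideanSpace.single i (1:ℝ), EuclideanSpace.single i (1:ℝ)]
          = C * Real.exp (κ * t) * κ *
            (κ * (μ i * μ i) - (2 * κ * t + 2) * (x i * μ i) + (κ * t^2 + 3 * t) * (x i * x i)
              - t) := by
      intro i
      rw [key]
      have i1 : (inner ℝ (EuclideanSpace.single i (1:ℝ)) μ : ℝ) = μ i := by
        simp [EuclideanSpace.inner_single_left]
      have i2 : (inner ℝ x (EuclideanSpace.single i (1:ℝ)) : ℝ) = x i := by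
        simp [EuclideanSpace.inner_single_right]
      have i3 : (inner ℝ (EuclideanSpace.single i (1:ℝ)) (EuclideanSpace.single i (1:ℝ)) : ℝ)
          = 1 := by
        simp [EuclideanSpace.inner_single_left]
      rw [i1, i2, i3]
      ring
    rw [Finset.sum_congr rfl fun i _ => hterm i, ← Finset.mul_sum,
      Finset.sum_sub_distrib, Finset.sum_add_distrib, Finset.sum_sub_distrib,
      ← Finset.mul_sum, ← Finset.mul_sum, ← Finset.mul_sum, e1, e2, e3,
      Finset.sum_const, Finset.card_univ]
    simp only [Fintype.card_fin, nsmul_eq_mul]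
    push_cast
    ring
  have hxx : iteratedFDeriv ℝ 2 g x ![x, x] = 0 := by
    rw [key x x, hx1, ← ht]
    ring
  rw [hg]
  unfold PsiOp
  rw [← hgdef] at *
  rw [hgrad, hsum, hxx]
  rw [show (κ * (inner ℝ x μ : ℝ)) = κ * t by rw [ht]]
  field_simp
  ring

end Aux
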